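/- The function k ↦ log(2 C_k D_k e^γ log² p_k) / (e · log(C_k log p_k)) is monotonically decreasing for k > 61 and tends to 2/e as k → ∞. -/

import Mathlib

open Real Filter

noncomputable def pk (k : ℕ) : ℝ := (Nat.nth Nat.Prime (k - 1) : ℝ)
noncomputable def Ck (k : ℕ) : ℝ := Real.exp (0.261498 + 1 / (2 * (Real.log (pk k))^2))
noncomputable def Dk (k : ℕ) : ℝ := 2 * (Real.log (pk k))^2 / (2 * (Real.log (pk k))^2 - 1)

noncomputable def f8 (k : ℕ) : ℝ :=
  Real.log (2 * Ck k * Dk k * Real.exp Real.eulerMascheroniConstant * (Real.log (pk k))^2) /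
    (Real.exp 1 * Real.log (Ck k * Real.log (pk k)))

/-! ### Auxiliary real functions -/

noncomputable def sL (L : ℝ) : ℝ := 1 / (2 * L ^ 2)
noncomputable def uL (L : ℝ) : ℝ := Real.log L + 0.261498 + sL L
noncomputable def cL (L : ℝ) : ℝ :=
  Real.log 2 + Real.eulerMascheroniConstant - 0.261498 + (-(Real.log (1 - sL L)) - sL L)

lemma sL_pos {L : ℝ} (h : 1 ≤ L) : 0 < sL L := by
  have : (0:ℝ) < L := lt_of_lt_of_le one_pos h
  unfold sL; positivity

lemma sL_lt_one {L : ℝ} (h : 1 ≤ L) : sL L < 1 := by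
  have hL : (0:ℝ) < L := lt_of_lt_of_le one_pos h
  have h2 : (1:ℝ) ≤ L ^ 2 := by nlinarith
  unfold sL
  rw [div_lt_one (by nlinarith)]
  nlinarith

lemma uL_pos {L : ℝ} (h : 1 ≤ L) : 0 < uL L := by
  have h1 : 0 ≤ Real.log L := Real.log_nonneg h
  have h2 : 0 < sL L := sL_pos h
  unfold uL; nlinarith

/-- Core inequality: `log y - log x ≥ 1 - x / y` for `0 < x ≤ y`. -/
lemma log_sub_log_ge {x y : ℝ} (hx : 0 < x) (hxy : x ≤ y) :
    1 - x / y ≤ Real.log y - Real.log x := by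
  have hy : 0 < y := lt_of_lt_of_le hx hxy
  have h := Real.log_le_sub_one_of_pos (show 0 < x / y by positivity)
  rw [Real.log_div hx.ne' hy.ne'] at h
  linarith

lemma uL_mono {L1 L2 : ℝ} (h1 : 1 ≤ L1) (h : L1 ≤ L2) : uL L1 ≤ uL L2 := by
  have hL1 : (0:ℝ) < L1 := lt_of_lt_of_le one_pos h1
  have hL2 : (0:ℝ) < L2 := lt_of_lt_of_le hL1 h
  have hlog := log_sub_log_ge hL1 h
  have key : sL L1 - sL L2 ≤ 1 - L1 / L2 := by
    unfold sL
    rw [div_sub_div _ _ (by positivity) (by positivity)]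
    rw [div_le_iff₀ (by positivity)]
    have e1 : 1 - L1 / L2 = (L2 - L1) / L2 := by field_simp
    rw [e1, div_mul_eq_mul_div, le_div_iff₀ hL2]
    nlinarith [mul_nonneg (mul_nonneg (sub_nonneg.2 h) hL2.le)
      (show (0:ℝ) ≤ 2*L1^2*L2 - L1 - L2 by
        nlinarith [mul_nonneg hL2.le (show (0:ℝ) ≤ L1^2 - 1 by nlinarith)])]
  unfold uL
  linarith

lemma cL_anti {L1 L2 : ℝ} (h1 : 1 ≤ L1) (h : L1 ≤ L2) : cL L2 ≤ cL L1 := by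
  have hL1 : (0:ℝ) < L1 := lt_of_lt_of_le one_pos h1
  have hs2 : sL L2 ≤ sL L1 := by
    unfold sL
    apply div_le_div_of_nonneg_left one_pos.le (by positivity)
    nlinarith
  have hs1lt : sL L1 < 1 := sL_lt_one h1
  have hs2pos : 0 < sL L2 := sL_pos (h1.trans h)
  -- log(1-s2) - log(1-s1) ≥ s1 - s2
  have hlog := log_sub_log_ge (show 0 < 1 - sL L1 by linarith) (by linarith : 1 - sL L1 ≤ 1 - sL L2)
  have key : sL L1 - sL L2 ≤ Real.log (1 - sL L2) - Real.log (1 - sL L1) := by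
    have h2 : (0:ℝ) < 1 - sL L2 := by linarith
    have : 1 - (1 - sL L1) / (1 - sL L2) = (sL L1 - sL L2) / (1 - sL L2) := by
      field_simp
      ring
    rw [this] at hlog
    have : sL L1 - sL L2 ≤ (sL L1 - sL L2) / (1 - sL L2) := by
      rw [le_div_iff₀ h2]
      nlinarith
    linarith
  unfold cL
  linarith

lemma cL_nonneg {L : ℝ} (h : 1 ≤ L) : 0 ≤ cL L := by
  have hs : 0 < sL L := sL_pos h
  have hs1 : sL L < 1 := sL_lt_one h
  have hlog2 : (0.6931471803:ℝ) < Real.log 2 := Real.log_two_gt_d9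
  have hγ : (1/2:ℝ) < Real.eulerMascheroniConstant := Real.one_half_lt_eulerMascheroniConstant
  have h2 : Real.log (1 - sL L) ≤ (1 - sL L) - 1 :=
    Real.log_le_sub_one_of_pos (by linarith)
  unfold cL
  nlinarith

lemma pk_prime_cast (k : ℕ) : 3 ≤ pk k ∨ pk k = 2 := by
  have h2 := Nat.add_two_le_nth_prime (k - 1)
  unfold pk
  rcases Nat.lt_or_ge (k-1) 1 with h | h
  · interval_cases h' : (k-1) <;> right <;> norm_num [h', Nat.nth_prime_zero_eq_two]
  · left
    have : 3 ≤ Nat.nth Nat.Prime (k-1) := le_trans (by omega) h2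
    exact_mod_cast this

lemma pk_ge_three {k : ℕ} (hk : 2 ≤ k) : 3 ≤ pk k := by
  have h2 := Nat.add_two_le_nth_prime (k - 1)
  have : 3 ≤ Nat.nth Nat.Prime (k-1) := le_trans (by omega) h2
  unfold pk; exact_mod_cast this

lemma pk_mono {k l : ℕ} (h : k ≤ l) : pk k ≤ pk l := by
  unfold pk
  exact_mod_cast Nat.nth_monotone Nat.infinite_setOf_prime (by omega : k - 1 ≤ l - 1)

lemma logpk_ge_one {k : ℕ} (hk : 2 ≤ k) : 1 ≤ Real.log (pk k) := by
  have h3 := pk_ge_three hk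
  have he : Real.exp 1 < 3 := lt_trans Real.exp_one_lt_d9 (by norm_num)
  have : Real.exp 1 ≤ pk k := le_trans he.le h3
  calc (1:ℝ) = Real.log (Real.exp 1) := (Real.log_exp 1).symm
    _ ≤ Real.log (pk k) := Real.log_le_log (Real.exp_pos 1) this

/-- The key rewriting of `f8`. -/
lemma f8_eq {k : ℕ} (hk : 2 ≤ k) :
    f8 k = 2 / Real.exp 1 + cL (Real.log (pk k)) / (Real.exp 1 * uL (Real.log (pk k))) := by
  set L := Real.log (pk k) with hLdef
  have hL : 1 ≤ L := logpk_ge_one hk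
  have hLpos : (0:ℝ) < L := lt_of_lt_of_le one_pos hL
  have hs : 0 < sL L := sL_pos hL
  have hs1 : sL L < 1 := sL_lt_one hL
  have h2L2 : (0:ℝ) < 2 * L ^ 2 := by positivity
  have h2L1 : (0:ℝ) < 2 * L ^ 2 - 1 := by nlinarith
  have hsface : 1 - sL L = (2 * L ^ 2 - 1) / (2 * L ^ 2) := by
    unfold sL; field_simp
  have hDk : Dk k = (1 - sL L)⁻¹ := by
    unfold Dk
    rw [← hLdef, hsface, inv_div]
  have hCk : Ck k = Real.exp (0.261498 + sL L) := by
    unfold Ck sL; rw [← hLdef]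
  have hDkpos : 0 < Dk k := by rw [hDk]; exact inv_pos.2 (by linarith)
  have hCkpos : 0 < Ck k := by rw [hCk]; positivity
  -- numerator
  have hnum : Real.log (2 * Ck k * Dk k * Real.exp Real.eulerMascheroniConstant * L ^ 2)
      = Real.log 2 + (0.261498 + sL L) + (-(Real.log (1 - sL L)))
        + Real.eulerMascheroniConstant + 2 * Real.log L := by
    rw [Real.log_mul (mul_pos (mul_pos (mul_pos two_pos hCkpos) hDkpos)
          (Real.exp_pos _)).ne' (pow_ne_zero 2 hLpos.ne'),
        Real.log_mul (mul_pos (mul_pos two_pos hCkpos) hDkpos).ne' (Real.exp_ne_zero _),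
        Real.log_mul (mul_pos two_pos hCkpos).ne' hDkpos.ne',
        Real.log_mul (by norm_num : (2:ℝ) ≠ 0) hCkpos.ne',
        hCk, Real.log_exp, Real.log_exp, hDk, Real.log_inv,
        Real.log_pow]
    push_cast; ring
  -- denominator
  have hden : Real.log (Ck k * L) = uL L := by
    rw [Real.log_mul hCkpos.ne' hLpos.ne', hCk, Real.log_exp]
    unfold uL; ring
  have hu : 0 < uL L := uL_pos hL
  have he : (0:ℝ) < Real.exp 1 := Real.exp_pos 1
  unfold f8
  rw [← hLdef, hnum, hden]
  have hnum2 : Real.log 2 + (0.261498 + sL L) + (-(Real.log (1 - sL L)))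
      + Real.eulerMascheroniConstant + 2 * Real.log L = 2 * uL L + cL L := by
    unfold uL cL; ring
  rw [hnum2]
  field_simp

lemma logpk_nonneg (k : ℕ) : 0 ≤ Real.log (pk k) := by
  apply Real.log_nonneg
  rcases pk_prime_cast k with h | h
  · linarith
  · rw [h]; norm_num

theorem f8_decreasing_and_tendsto :
    (∀ k l : ℕ, 61 < k → k ≤ l → f8 l ≤ f8 k) ∧
    Tendsto f8 atTop (nhds (2 / Real.exp 1)) := by
  have he : (0:ℝ) < Real.exp 1 := Real.exp_pos 1
  constructor
  · intro k l hk hkl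
    have hk2 : 2 ≤ k := by omega
    have hl2 : 2 ≤ l := by omega
    rw [f8_eq hk2, f8_eq hl2]
    have hLk : 1 ≤ Real.log (pk k) := logpk_ge_one hk2
    have hLkl : Real.log (pk k) ≤ Real.log (pk l) :=
      Real.log_le_log (by linarith [pk_ge_three hk2]) (pk_mono hkl)
    have huk : 0 < uL (Real.log (pk k)) := uL_pos hLk
    have key : cL (Real.log (pk l)) / (Real.exp 1 * uL (Real.log (pk l)))
        ≤ cL (Real.log (pk k)) / (Real.exp 1 * uL (Real.log (pk k))) := by
      apply div_le_div₀ (cL_nonneg hLk) (cL_anti hLk hLkl) (mul_pos he huk)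
      exact mul_le_mul_of_nonneg_left (uL_mono hLk hLkl) he.le
    linarith
  · -- the limit
    have hpk_top : Tendsto pk atTop atTop := by
      apply tendsto_atTop_mono (fun k => ?_) tendsto_natCast_atTop_atTop
      have h := Nat.add_two_le_nth_prime (k - 1)
      have : k ≤ Nat.nth Nat.Prime (k - 1) := le_trans (by omega) h
      unfold pk; exact_mod_cast this
    have hL_top : Tendsto (fun k => Real.log (pk k)) atTop atTop :=
      Real.tendsto_log_atTop.comp hpk_top
    have hs0 : Tendsto (fun k => sL (Real.log (pk k))) atTop (nhds 0) := by
      have h1 : Tendsto (fun x : ℝ => sL x) atTop (nhds 0) := by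
        unfold sL
        apply Tendsto.div_atTop tendsto_const_nhds
        exact (tendsto_pow_atTop (by norm_num)).const_mul_atTop (by norm_num)
      exact h1.comp hL_top
    have h1s : Tendsto (fun k => 1 - sL (Real.log (pk k))) atTop (nhds 1) := by
      simpa using hs0.const_sub (1:ℝ)
    have hlog1s : Tendsto (fun k => Real.log (1 - sL (Real.log (pk k)))) atTop (nhds 0) := by
      have := (Real.continuousAt_log one_ne_zero).tendsto.comp h1s
      simpa [Function.comp_def, Real.log_one] using this
    have hc : Tendsto (fun k => cL (Real.log (pk k))) atTop
        (nhds (Real.log 2 + Real.eulerMascheroniConstant - 0.261498)) := by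
      unfold cL
      simpa using (hlog1s.neg.sub hs0).const_add
        (Real.log 2 + Real.eulerMascheroniConstant - 0.261498)
    have hu_top : Tendsto (fun k => Real.exp 1 * uL (Real.log (pk k))) atTop atTop := by
      apply Tendsto.const_mul_atTop he
      apply tendsto_atTop_mono (fun k => ?_) (Real.tendsto_log_atTop.comp hL_top)
      have hs : 0 ≤ sL (Real.log (pk k)) := by unfold sL; positivity
      show Real.log (Real.log (pk k)) ≤ uL (Real.log (pk k))
      unfold uL; nlinarith
    have hdiv : Tendsto (fun k => cL (Real.log (pk k)) /
        (Real.exp 1 * uL (Real.log (pk k)))) atTop (nhds 0) :=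
      hc.div_atTop hu_top
    have hfin : Tendsto (fun k => 2 / Real.exp 1 + cL (Real.log (pk k)) /
        (Real.exp 1 * uL (Real.log (pk k)))) atTop (nhds (2 / Real.exp 1)) := by
      simpa using hdiv.const_add (2 / Real.exp 1 : ℝ)
    apply hfin.congr'
    filter_upwards [eventually_ge_atTop 2] with k hk
    exact (f8_eq hk).symm
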